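/- For all real z ≥ 2, every positive integer q, and every integer a coprime to q: |π(z; q, a) − π(z)/φ(q)| ≤ 2 · sup_{2 ≤ t ≤ z} |θ(t; q, a) − θ(t)/φ(q)|. -/

import Mathlib

/-- `π(z)`: the number of primes `p ≤ z`. -/
noncomputable def piCount (z : ℝ) : ℕ :=
  ((Finset.Icc 1 ⌊z⌋₊).filter Nat.Prime).card

/-- `π(z; q, a)`: the number of primes `p ≤ z` with `p ≡ a (mod q)`. -/
noncomputable def piCountMod (z : ℝ) (q : ℕ) (a : ℤ) : ℕ :=
  ((Finset.Icc 1 ⌊z⌋₊).filter (fun p : ℕ => p.Prime ∧ (p : ℤ) % (q : ℤ) = a % (q : ℤ))).card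

/-- `θ(t) = ∑_{p ≤ t} log p`. -/
noncomputable def thetaCheb (t : ℝ) : ℝ :=
  ∑ p ∈ (Finset.Icc 1 ⌊t⌋₊).filter Nat.Prime, Real.log p

/-- `θ(t; q, a) = ∑_{p ≤ t, p ≡ a (mod q)} log p`. -/
noncomputable def thetaChebMod (t : ℝ) (q : ℕ) (a : ℤ) : ℝ :=
  ∑ p ∈ (Finset.Icc 1 ⌊t⌋₊).filter (fun p : ℕ => p.Prime ∧ (p : ℤ) % (q : ℤ) = a % (q : ℤ)),
    Real.log p

theorem pi_error_le_two_mul_sup_theta_error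
    (z : ℝ) (hz : 2 ≤ z) (q : ℕ) (hq : 0 < q) (a : ℤ) (ha : IsCoprime a (q : ℤ)) :
    |(piCountMod z q a : ℝ) - (piCount z : ℝ) / (Nat.totient q)| ≤
      2 * sSup ((fun t => |thetaChebMod t q a - thetaCheb t / (Nat.totient q)|) ''
        Set.Icc 2 z) := by
  have hz0 : (0:ℝ) ≤ z := by linarith
  set φ : ℝ := ((Nat.totient q : ℝ)) with hφdef
  have hφ1 : (1:ℝ) ≤ φ := by
    have h := (Nat.totient_pos).mpr hq
    rw [hφdef]
    exact_mod_cast Nat.one_le_iff_ne_zero.mpr h.ne'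
  have hφ0 : (0:ℝ) < φ := lt_of_lt_of_le one_pos hφ1
  set N := ⌊z⌋₊ with hNdef
  have hN2 : 2 ≤ N := Nat.le_floor (by exact_mod_cast hz)
  have hNz : (N:ℝ) ≤ z := Nat.floor_le hz0
  set g : ℕ → ℝ := fun k =>
    (if k.Prime ∧ (k:ℤ) % (q:ℤ) = a % (q:ℤ) then Real.log k else 0)
      - (if k.Prime then Real.log k else 0) / φ with hg
  set f : ℕ → ℝ := fun k =>
    (if k.Prime ∧ (k:ℤ) % (q:ℤ) = a % (q:ℤ) then (1:ℝ) else 0)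
      - (if k.Prime then (1:ℝ) else 0) / φ with hf
  have hfg : ∀ k, f k = g k / Real.log k := by
    intro k
    by_cases hp : k.Prime
    · have hk2 : (2:ℝ) ≤ (k:ℝ) := by exact_mod_cast hp.two_le
      have hlog : Real.log k ≠ 0 := ne_of_gt (Real.log_pos (by linarith))
      by_cases hc : (k:ℤ) % (q:ℤ) = a % (q:ℤ)
      · simp only [hf, hg, hp, hc, if_true, if_false, true_and]
        field_simp
      · simp only [hf, hg, hp, hc, if_true, if_false, true_and]
        field_simp
        ring
    · simp [hf, hg, hp]
  -- link sums to theta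
  have hD : ∀ n : ℕ, thetaChebMod (n:ℝ) q a - thetaCheb (n:ℝ) / φ
      = ∑ k ∈ Finset.Icc 1 n, g k := by
    intro n
    simp only [thetaChebMod, thetaCheb, Nat.floor_natCast, hg]
    rw [Finset.sum_sub_distrib, ← Finset.sum_div, Finset.sum_filter, Finset.sum_filter]
  -- the sup
  set M := sSup ((fun t => |thetaChebMod t q a - thetaCheb t / φ|) '' Set.Icc 2 z) with hM
  have hmono : ∀ t ∈ Set.Icc (2:ℝ) z,
      0 ≤ thetaChebMod t q a ∧ thetaChebMod t q a ≤ thetaCheb z ∧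
      0 ≤ thetaCheb t ∧ thetaCheb t ≤ thetaCheb z := by
    intro t ht
    have hfloor : ⌊t⌋₊ ≤ ⌊z⌋₊ := Nat.floor_mono ht.2
    have hnn : ∀ p ∈ (Finset.Icc 1 ⌊z⌋₊).filter Nat.Prime, 0 ≤ Real.log p := by
      intro p hp
      rw [Finset.mem_filter, Finset.mem_Icc] at hp
      exact Real.log_nonneg (by exact_mod_cast hp.1.1)
    refine ⟨?_, ?_, ?_, ?_⟩
    · apply Finset.sum_nonneg
      intro p hp
      rw [Finset.mem_filter, Finset.mem_Icc] at hp
      exact Real.log_nonneg (by exact_mod_cast hp.1.1)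
    · apply Finset.sum_le_sum_of_subset_of_nonneg
      · intro p hp
        rw [Finset.mem_filter, Finset.mem_Icc] at hp ⊢
        exact ⟨⟨hp.1.1, le_trans hp.1.2 hfloor⟩, hp.2.1⟩
      · intro p hp _; exact hnn p hp
    · apply Finset.sum_nonneg
      intro p hp
      rw [Finset.mem_filter, Finset.mem_Icc] at hp
      exact Real.log_nonneg (by exact_mod_cast hp.1.1)
    · apply Finset.sum_le_sum_of_subset_of_nonneg
      · intro p hp
        rw [Finset.mem_filter, Finset.mem_Icc] at hp ⊢
        exact ⟨⟨hp.1.1, le_trans hp.1.2 hfloor⟩, hp.2⟩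
      · intro p hp _; exact hnn p hp
  have hBdd : BddAbove ((fun t => |thetaChebMod t q a - thetaCheb t / φ|) '' Set.Icc 2 z) := by
    refine ⟨2 * thetaCheb z, ?_⟩
    rintro x ⟨t, ht, rfl⟩
    obtain ⟨h1, h2, h3, h4⟩ := hmono t ht
    have h5 : thetaCheb t / φ ≤ thetaCheb t := div_le_self h3 hφ1
    have h6 : 0 ≤ thetaCheb t / φ := div_nonneg h3 (le_of_lt hφ0)
    rw [abs_le]
    constructor
    · linarith
    · linarith
  have hM0 : 0 ≤ M := by
    have hmem : |thetaChebMod 2 q a - thetaCheb 2 / φ| ∈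
        ((fun t => |thetaChebMod t q a - thetaCheb t / φ|) '' Set.Icc 2 z) :=
      ⟨2, ⟨le_refl _, hz⟩, rfl⟩
    exact le_trans (abs_nonneg _) (le_csSup hBdd hmem)
  have hDM : ∀ n : ℕ, 2 ≤ n → n ≤ N → |∑ k ∈ Finset.Icc 1 n, g k| ≤ M := by
    intro n h2 hn
    rw [← hD n]
    refine le_csSup hBdd ⟨(n:ℝ), ⟨by exact_mod_cast h2, ?_⟩, rfl⟩
    exact le_trans (by exact_mod_cast hn) hNz
  -- main induction
  have key : ∀ n : ℕ, 2 ≤ n → n ≤ N →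
      |(∑ k ∈ Finset.Icc 1 n, f k) - (∑ k ∈ Finset.Icc 1 n, g k) / Real.log n|
        ≤ M * (1 / Real.log 2 - 1 / Real.log n) := by
    intro n hn
    induction n, hn using Nat.le_induction with
    | base =>
      intro _
      have h12 : (1:ℕ) ≤ 1 + 1 := by norm_num
      rw [show (2:ℕ) = 1 + 1 from rfl, Finset.sum_Icc_succ_top h12,
        Finset.sum_Icc_succ_top h12, Finset.Icc_self, Finset.sum_singleton,
        Finset.sum_singleton]
      have hf1 : f 1 = 0 := by simp [hf, Nat.not_prime_one]
      have hg1 : g 1 = 0 := by simp [hg, Nat.not_prime_one]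
      have := hfg (1 + 1)
      rw [hf1, hg1, this]
      norm_num
    | succ n hn ih =>
      intro hn1
      have hnN : n ≤ N := le_trans (Nat.le_succ n) hn1
      have ihh := ih hnN
      have hn2 : (2:ℝ) ≤ (n:ℝ) := by exact_mod_cast hn
      have hlogn : 0 < Real.log n := Real.log_pos (by linarith)
      have hlogn1 : 0 < Real.log (n+1:ℕ) := by
        apply Real.log_pos; push_cast; linarith
      have hle : Real.log n ≤ Real.log (n+1:ℕ) := by
        apply Real.log_le_log (by linarith)
        push_cast; linarith
      have hDn : |∑ k ∈ Finset.Icc 1 n, g k| ≤ M := hDM n hn hnN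
      rw [Finset.sum_Icc_succ_top (by omega), Finset.sum_Icc_succ_top (by omega)]
      set En := ∑ k ∈ Finset.Icc 1 n, f k with hEn
      set Dn := ∑ k ∈ Finset.Icc 1 n, g k with hDnd
      have e1 : En + f (n+1) - (Dn + g (n+1)) / Real.log (n+1:ℕ)
          = (En - Dn / Real.log n) + Dn * (1 / Real.log n - 1 / Real.log (n+1:ℕ)) := by
        rw [hfg (n+1)]
        field_simp
        ring
      rw [e1]
      have step2 : |Dn * (1 / Real.log n - 1 / Real.log (n+1:ℕ))|
          ≤ M * (1 / Real.log n - 1 / Real.log (n+1:ℕ)) := by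
        rw [abs_mul]
        have hd : 0 ≤ 1 / Real.log n - 1 / Real.log (n+1:ℕ) := by
          have := one_div_le_one_div_of_le hlogn hle
          linarith
        rw [abs_of_nonneg hd]
        exact mul_le_mul_of_nonneg_right hDn hd
      calc |(En - Dn / Real.log n) + Dn * (1 / Real.log n - 1 / Real.log (n+1:ℕ))|
          ≤ |En - Dn / Real.log n| + |Dn * (1 / Real.log n - 1 / Real.log (n+1:ℕ))| :=
            abs_add_le _ _
        _ ≤ M * (1 / Real.log 2 - 1 / Real.log n)
              + M * (1 / Real.log n - 1 / Real.log (n+1:ℕ)) := add_le_add ihh step2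
        _ = M * (1 / Real.log 2 - 1 / Real.log (n+1:ℕ)) := by ring
  -- conclude
  have hEz : (piCountMod z q a : ℝ) - (piCount z : ℝ) / φ = ∑ k ∈ Finset.Icc 1 N, f k := by
    simp only [piCountMod, piCount, hf, ← hNdef]
    rw [Finset.sum_sub_distrib, ← Finset.sum_div, Finset.sum_boole, Finset.sum_boole]
  rw [hEz]
  have hfinal := key N hN2 le_rfl
  have hDNM := hDM N hN2 le_rfl
  have hN2' : (2:ℝ) ≤ (N:ℝ) := by exact_mod_cast hN2
  have hlogN : 0 < Real.log N := Real.log_pos (by linarith)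
  have hlog2 : 0 < Real.log 2 := Real.log_pos (by norm_num)
  set En := ∑ k ∈ Finset.Icc 1 N, f k
  set Dn := ∑ k ∈ Finset.Icc 1 N, g k
  have e2 : En = (En - Dn / Real.log N) + Dn / Real.log N := by ring
  have h7 : |En| ≤ M * (1 / Real.log 2 - 1 / Real.log N) + M / Real.log N := by
    rw [e2]
    refine le_trans (abs_add_le _ _) (add_le_add hfinal ?_)
    rw [abs_div, abs_of_pos hlogN]
    gcongr
  have e3 : M * (1 / Real.log 2 - 1 / Real.log ↑N) + M / Real.log ↑N = M / Real.log 2 := by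
    field_simp
    ring
  have h8 : M / Real.log 2 ≤ 2 * M := by
    rw [div_le_iff₀ hlog2]
    nlinarith [Real.log_two_gt_d9, hM0]
  linarith
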